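/- Let (E,q) and (E',q') be metric groups and let L be a Lagrangian subgroup of E ⊕ E' with respect to the quadratic form (x,x') ↦ q(x)⁻¹·q'(x'). Suppose L ∩ (E ⊕ 0) = {0} and L ∩ (0 ⊕ E') = {0}. Then |E| = |E'| and there exists an isometry g : (E,q) → (E',q') (an additive isomorphism with q'(g(x)) = q(x) for all x) such that L = {(x, g(x)) : x ∈ E}. -/
import Mathlib


/-- The symmetric bicharacter associated to a quadratic form `q` with values in `ℂˣ`. -/
def bq {M : Type*} [AddCommGroup M] (q : M → ℂˣ) (x y : M) : ℂˣ :=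
  q (x + y) * (q x)⁻¹ * (q y)⁻¹

/-- `(M, q)` is a metric group: `q` is even, `b_q` is biadditive and nondegenerate. -/
def IsMetric {M : Type*} [AddCommGroup M] (q : M → ℂˣ) : Prop :=
  (∀ x, q (-x) = q x) ∧
  (∀ x y z, bq q (x + y) z = bq q x z * bq q y z) ∧
  (∀ x y z, bq q x (y + z) = bq q x y * bq q x z) ∧
  (∀ x, (∀ y, bq q x y = 1) → x = 0)

/-- A subgroup `L` is Lagrangian for `q` if `q = 1` on `L` and `|L|² = |M|`. -/
def IsLagrangian {M : Type*} [AddCommGroup M] (q : M → ℂˣ) (L : AddSubgroup M) : Prop :=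
  (∀ x ∈ L, q x = 1) ∧ Nat.card L ^ 2 = Nat.card M

/-- A Lagrangian subgroup of `E ⊕ E'` meeting both factors trivially is the graph of
an isometry `g : (E,q) → (E',q')`; in particular `|E| = |E'|`. -/
theorem stmt13 {E E' : Type*} [AddCommGroup E] [Fintype E]
    [AddCommGroup E'] [Fintype E'] (q : E → ℂˣ) (q' : E' → ℂˣ)
    (hq : IsMetric q) (hq' : IsMetric q')
    (L : AddSubgroup (E × E'))
    (hL : IsLagrangian (fun p : E × E' => (q p.1)⁻¹ * q' p.2) L)
    (hE : ∀ x : E, (x, (0 : E')) ∈ L → x = 0)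
    (hE' : ∀ y : E', ((0 : E), y) ∈ L → y = 0) :
    Nat.card E = Nat.card E' ∧
      ∃ g : E ≃+ E', (∀ x, q' (g x) = q x) ∧
        (L : Set (E × E')) = {p : E × E' | p.2 = g p.1} := by
  classical
  set f1 : L →+ E := (AddMonoidHom.fst E E').comp L.subtype with hf1
  set f2 : L →+ E' := (AddMonoidHom.snd E E').comp L.subtype with hf2
  have hinj1 : Function.Injective f1 := by
    intro a b h
    have h : (a : E × E').1 = (b : E × E').1 := h
    have hm : ((a : E × E') - b) ∈ L := sub_mem a.2 b.2
    have heq : ((a : E × E') - (b : E × E')) =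
        ((0 : E), (a : E × E').2 - (b : E × E').2) := by
      ext
      · simp [h]
      · rfl
    rw [heq] at hm
    have h2 := hE' _ hm
    exact Subtype.ext (Prod.ext h (sub_eq_zero.mp h2))
  have hinj2 : Function.Injective f2 := by
    intro a b h
    have h : (a : E × E').2 = (b : E × E').2 := h
    have hm : ((a : E × E') - b) ∈ L := sub_mem a.2 b.2
    have heq : ((a : E × E') - (b : E × E')) =
        ((a : E × E').1 - (b : E × E').1, (0 : E')) := by
      ext
      · rfl
      · simp [h]
    rw [heq] at hm
    have h2 := hE _ hm
    exact Subtype.ext (Prod.ext (sub_eq_zero.mp h2) h)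
  have hle1 : Nat.card L ≤ Nat.card E := Nat.card_le_card_of_injective f1 hinj1
  have hle2 : Nat.card L ≤ Nat.card E' := Nat.card_le_card_of_injective f2 hinj2
  have hsq : Nat.card L * Nat.card L = Nat.card E * Nat.card E' := by
    have := hL.2
    rwa [Nat.card_prod, pow_two] at this
  have hpos : 0 < Nat.card L := Nat.card_pos
  have hpos' : 0 < Nat.card E' := Nat.card_pos
  have hb : Nat.card L = Nat.card E := by
    refine le_antisymm hle1 ?_
    have h1 : Nat.card E * Nat.card E' ≤ Nat.card L * Nat.card E' := by
      calc Nat.card E * Nat.card E' = Nat.card L * Nat.card L := hsq.symm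
        _ ≤ Nat.card L * Nat.card E' := Nat.mul_le_mul_left _ hle2
    exact Nat.le_of_mul_le_mul_right h1 hpos'
  have hc : Nat.card L = Nat.card E' := by
    have h1 : Nat.card L * Nat.card L = Nat.card L * Nat.card E' := by
      rw [hsq, hb]
    exact Nat.eq_of_mul_eq_mul_left hpos h1
  have hbij1 : Function.Bijective f1 :=
    (Nat.bijective_iff_injective_and_card f1).2 ⟨hinj1, hb⟩
  have hbij2 : Function.Bijective f2 :=
    (Nat.bijective_iff_injective_and_card f2).2 ⟨hinj2, hc⟩
  set e1 : L ≃+ E := AddEquiv.ofBijective f1 hbij1 with he1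
  set e2 : L ≃+ E' := AddEquiv.ofBijective f2 hbij2 with he2
  set g : E ≃+ E' := e1.symm.trans e2 with hg
  have key : ∀ x : E, ((x, g x) : E × E') ∈ L := by
    intro x
    have h1 : ((e1.symm x : L) : E × E') = (x, g x) := by
      ext
      · exact e1.apply_symm_apply x
      · rfl
    rw [← h1]
    exact (e1.symm x).2
  refine ⟨hb ▸ hc, g, ?_, ?_⟩
  · intro x
    have := hL.1 _ (key x)
    simpa using (inv_mul_eq_one.mp this).symm
  · ext p
    simp only [SetLike.mem_coe, Set.mem_setOf_eq]
    constructor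
    · intro hp
      have hm : (p - ((p.1, g p.1) : E × E')) ∈ L := sub_mem hp (key p.1)
      have heq : (p - ((p.1, g p.1) : E × E')) = ((0 : E), p.2 - g p.1) := by
        ext
        · simp
        · rfl
      rw [heq] at hm
      exact sub_eq_zero.mp (hE' _ hm)
    · intro h
      have : p = ((p.1, g p.1) : E × E') := by
        ext
        · rfl
        · exact h
      rw [this]
      exact key p.1
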